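/- The function α₁ is strictly increasing, strictly convex, and C¹ on [-1,1), with derivative α₁'(e) = 2√2 ∫₀^{θ₁(e)} (e + cos θ)^{-1/2} dθ for e ∈ (-1,1), and its right-derivative at e = -1 equals 2π. -/

import Mathlib

open Real Set

noncomputable def theta1 (e : ℝ) : ℝ := Real.arccos (-e)

/-- α₁(e) = 4√2 ∫₀^{θ₁(e)} (e + cos θ)^{1/2} dθ. -/
noncomputable def alpha1 (e : ℝ) : ℝ :=
  4 * Real.sqrt 2 * ∫ θ in (0:ℝ)..(theta1 e), Real.sqrt (e + Real.cos θ)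

/-- α₁'(e) = 2√2 ∫₀^{θ₁(e)} (e + cos θ)^{-1/2} dθ. -/
noncomputable def dalpha1 (e : ℝ) : ℝ :=
  2 * Real.sqrt 2 * ∫ θ in (0:ℝ)..(theta1 e), 1 / Real.sqrt (e + Real.cos θ)

namespace Alpha1Aux

open MeasureTheory intervalIntegral Filter


noncomputable def Df (e ψ : ℝ) : ℝ := 1 - e + (1 + e) * Real.sin ψ ^ 2

lemma D_ge {b e : ℝ} (heb : e ≤ b) (hb : b < 1) (ψ : ℝ) : min 2 (1 - b) ≤ Df e ψ := by
  have h1 : 0 ≤ Real.sin ψ ^ 2 := sq_nonneg _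
  have h2 : Real.sin ψ ^ 2 ≤ 1 := Real.sin_sq_le_one ψ
  rcases le_total (-1) e with h | h
  · have : (1:ℝ) - b ≤ Df e ψ := by unfold Df; nlinarith
    exact le_trans (min_le_right _ _) this
  · have : (2:ℝ) ≤ Df e ψ := by unfold Df; nlinarith
    exact le_trans (min_le_left _ _) this

lemma D_pos {e : ℝ} (he : e < 1) (ψ : ℝ) : 0 < Df e ψ :=
  lt_of_lt_of_le (lt_min two_pos (by linarith)) (D_ge le_rfl he ψ)

lemma sqrtD_pos {e : ℝ} (he : e < 1) (ψ : ℝ) : 0 < Real.sqrt (Df e ψ) :=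
  Real.sqrt_pos.mpr (D_pos he ψ)

lemma contD (e : ℝ) : Continuous (fun ψ => Df e ψ) := by
  unfold Df; fun_prop

/-- the substitution map -/
noncomputable def subf (e ψ : ℝ) : ℝ := 2 * Real.arcsin (Real.sqrt ((1 + e) / 2) * Real.cos ψ)

lemma subf_zero {e : ℝ} (he : -1 ≤ e) (he1 : e ≤ 1) : subf e 0 = theta1 e := by
  have hc2 : Real.sqrt ((1 + e) / 2) ^ 2 = (1 + e) / 2 := Real.sq_sqrt (by linarith)
  have hc1 : Real.sqrt ((1 + e) / 2) ≤ 1 := Real.sqrt_le_one.mpr (by linarith)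
  have hc0 : 0 ≤ Real.sqrt ((1 + e) / 2) := Real.sqrt_nonneg _
  have hcos : Real.cos (subf e 0) = -e := by
    rw [subf, Real.cos_zero, mul_one, Real.cos_two_mul, Real.cos_arcsin]
    rw [Real.sq_sqrt (by nlinarith : (0:ℝ) ≤ 1 - Real.sqrt ((1+e)/2) ^ 2)]
    rw [hc2]; ring
  have h0 : 0 ≤ subf e 0 := by
    rw [subf, Real.cos_zero, mul_one]
    have := Real.arcsin_nonneg.mpr hc0
    linarith
  have hπ : subf e 0 ≤ π := by
    rw [subf, Real.cos_zero, mul_one]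
    have := Real.arcsin_le_pi_div_two (Real.sqrt ((1+e)/2))
    linarith
  rw [theta1, ← hcos, Real.arccos_cos h0 hπ]

lemma subf_pi_div_two (e : ℝ) : subf e (π/2) = 0 := by
  simp [subf]






lemma continuous_subf (e : ℝ) : Continuous (subf e) := by
  unfold subf
  exact continuous_const.mul (Real.continuous_arcsin.comp (continuous_const.mul Real.continuous_cos))

lemma hasDerivAt_subf {e : ℝ} (he : -1 < e) (he1 : e < 1) {ψ : ℝ} (h0 : 0 < ψ) (hπ : ψ < π/2) :
    HasDerivAt (subf e) (-(2 * Real.sqrt (1+e) * Real.sin ψ / Real.sqrt (Df e ψ))) ψ := by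
  set c : ℝ := Real.sqrt ((1 + e) / 2) with hc
  have hc2 : c ^ 2 = (1 + e) / 2 := Real.sq_sqrt (by linarith)
  have hc0 : 0 < c := Real.sqrt_pos.mpr (by linarith)
  have hc1 : c < 1 := by nlinarith
  have hcosψ : 0 < Real.cos ψ := Real.cos_pos_of_mem_Ioo ⟨by linarith [Real.pi_pos], hπ⟩
  have hcos1 : Real.cos ψ ≤ 1 := Real.cos_le_one ψ
  have hx1 : c * Real.cos ψ < 1 := by nlinarith
  have hxm1 : -1 < c * Real.cos ψ := by nlinarith
  have harc : HasDerivAt Real.arcsin (1 / Real.sqrt (1 - (c * Real.cos ψ) ^ 2))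
      (c * Real.cos ψ) := Real.hasDerivAt_arcsin (by linarith) (by linarith)
  have hin : HasDerivAt (fun ψ => c * Real.cos ψ) (c * (-Real.sin ψ)) ψ :=
    (Real.hasDerivAt_cos ψ).const_mul c
  have h := ((harc.comp ψ hin).const_mul 2)
  have key : 1 - (c * Real.cos ψ) ^ 2 = Df e ψ / 2 := by
    have hcs : Real.cos ψ ^ 2 = 1 - Real.sin ψ ^ 2 := Real.cos_sq' ψ
    unfold Df; rw [mul_pow, hc2, hcs]; ring
  have hsd : Real.sqrt (Df e ψ / 2) = Real.sqrt (Df e ψ) / Real.sqrt 2 :=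
    Real.sqrt_div (le_of_lt (D_pos he1 ψ)) 2
  have hs1e : Real.sqrt (1 + e) = c * Real.sqrt 2 := by
    rw [hc, ← Real.sqrt_mul (by linarith : (0:ℝ) ≤ (1+e)/2)]
    norm_num
  refine h.congr_deriv ?_; symm
  rw [key, hsd, hs1e]
  have h2 : Real.sqrt 2 ≠ 0 := by positivity
  have hD : Real.sqrt (Df e ψ) ≠ 0 := ne_of_gt (sqrtD_pos he1 ψ)
  field_simp

lemma strictAntiOn_subf {e : ℝ} (he : -1 < e) (he1 : e ≤ 1) :
    StrictAntiOn (subf e) (Icc 0 (π/2)) := by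
  intro x hx y hy hxy
  set c : ℝ := Real.sqrt ((1 + e) / 2) with hc
  have hc2 : c ^ 2 = (1 + e) / 2 := Real.sq_sqrt (by linarith)
  have hc0 : 0 < c := Real.sqrt_pos.mpr (by linarith)
  have hc1 : c ≤ 1 := Real.sqrt_le_one.mpr (by linarith)
  have hpi := Real.pi_pos
  have hxm : x ∈ Icc 0 π := ⟨hx.1, by linarith [hx.2]⟩
  have hym : y ∈ Icc 0 π := ⟨hy.1, by linarith [hy.2]⟩
  have hcos : Real.cos y < Real.cos x := Real.strictAntiOn_cos hxm hym hxy
  have hmul : c * Real.cos y < c * Real.cos x := by nlinarith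
  have hbx : c * Real.cos x ∈ Icc (-1:ℝ) 1 := by
    constructor <;> nlinarith [Real.neg_one_le_cos x, Real.cos_le_one x]
  have hby : c * Real.cos y ∈ Icc (-1:ℝ) 1 := by
    constructor <;> nlinarith [Real.neg_one_le_cos y, Real.cos_le_one y]
  have := Real.strictMonoOn_arcsin hby hbx hmul
  unfold subf
  linarith

lemma image_subf {e : ℝ} (he : -1 < e) (he1 : e < 1) :
    subf e '' Ioo 0 (π/2) = Ioo 0 (theta1 e) := by
  have hpi : (0:ℝ) < π/2 := by linarith [Real.pi_pos]
  apply Subset.antisymm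
  · rintro _ ⟨ψ, hψ, rfl⟩
    constructor
    · have := strictAntiOn_subf he he1.le ⟨hψ.1.le, hψ.2.le⟩ ⟨hpi.le, le_rfl⟩ hψ.2
      rw [subf_pi_div_two] at this; exact this
    · have := strictAntiOn_subf he he1.le ⟨le_rfl, hpi.le⟩ ⟨hψ.1.le, hψ.2.le⟩ hψ.1
      rw [subf_zero he.le he1.le] at this; exact this
  · have h := intermediate_value_Ioo' hpi.le ((continuous_subf e).continuousOn)
    rw [subf_zero he.le he1.le, subf_pi_div_two] at h
    exact h

lemma subst_gen {e : ℝ} (he : -1 < e) (he1 : e < 1) (g : ℝ → ℝ) :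
    ∫ θ in Ioo 0 (theta1 e), g θ
      = ∫ ψ in Ioo 0 (π/2), (2 * Real.sqrt (1+e) * Real.sin ψ / Real.sqrt (Df e ψ)) * g (subf e ψ) := by
  rw [← image_subf he he1]
  rw [integral_image_eq_integral_abs_deriv_smul measurableSet_Ioo
    (fun x hx => ((hasDerivAt_subf he he1 hx.1 hx.2).hasDerivWithinAt))
    (((strictAntiOn_subf he he1.le).injOn).mono Ioo_subset_Icc_self) g]
  apply setIntegral_congr_fun measurableSet_Ioo
  intro ψ hψ
  have hsin : 0 < Real.sin ψ := Real.sin_pos_of_pos_of_lt_pi hψ.1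
    (by linarith [hψ.2, Real.pi_pos])
  have : |(-(2 * Real.sqrt (1+e) * Real.sin ψ / Real.sqrt (Df e ψ)))|
      = 2 * Real.sqrt (1+e) * Real.sin ψ / Real.sqrt (Df e ψ) := by
    rw [abs_neg, abs_of_nonneg]
    positivity
  dsimp only
  rw [smul_eq_mul, this]






lemma measD (e : ℝ) : Measurable (fun ψ => Df e ψ) := (contD e).measurable

/-- derivative in e of `Df` -/
lemma hasDerivAt_D (e ψ : ℝ) : HasDerivAt (fun e => Df e ψ) (Real.sin ψ ^ 2 - 1) e := by
  have h1 : HasDerivAt (fun e : ℝ => 1 - e) (-1) e := by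
    simpa using (hasDerivAt_id e).const_sub 1
  have h2 : HasDerivAt (fun e : ℝ => (1 + e) * Real.sin ψ ^ 2) (Real.sin ψ ^ 2) e := by
    simpa using ((hasDerivAt_id e).const_add 1).mul_const (Real.sin ψ ^ 2)
  have := h1.add h2
  exact this.congr_deriv (by ring)

/-- pointwise derivative in e of `1/√D` -/
lemma hasDerivAt_invSqrtD {e : ℝ} (he : e < 1) (ψ : ℝ) :
    HasDerivAt (fun e => 1 / Real.sqrt (Df e ψ))
      (Real.cos ψ ^ 2 / (2 * Real.sqrt (Df e ψ) ^ 3)) e := by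
  have hD := D_pos he ψ
  have hs := sqrtD_pos he ψ
  have h1 : HasDerivAt (fun e => Real.sqrt (Df e ψ))
      ((Real.sin ψ ^ 2 - 1) / (2 * Real.sqrt (Df e ψ))) e :=
    (hasDerivAt_D e ψ).sqrt (ne_of_gt hD)
  have h2 := ((hasDerivAt_const e (1:ℝ)).div h1 (ne_of_gt hs))
  refine h2.congr_deriv ?_; symm
  have hcs : Real.cos ψ ^ 2 = 1 - Real.sin ψ ^ 2 := Real.cos_sq' ψ
  rw [hcs]
  have hsq : Real.sqrt (Df e ψ) ^ 2 = Df e ψ := Real.sq_sqrt hD.le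
  field_simp
  ring





lemma hasDerivAt_param {w : ℝ → ℝ} (hw : Continuous w) (hwb : ∀ ψ, |w ψ| ≤ 1)
    {e₀ : ℝ} (he : e₀ < 1) :
    HasDerivAt (fun e => ∫ ψ in (0:ℝ)..(π/2), w ψ / Real.sqrt (Df e ψ))
      (∫ ψ in (0:ℝ)..(π/2), w ψ * Real.cos ψ ^ 2 / (2 * Real.sqrt (Df e₀ ψ) ^ 3)) e₀ := by
  have hε : (0:ℝ) < (1 - e₀)/2 := by linarith
  set ε : ℝ := (1 - e₀)/2 with hεdef
  set m : ℝ := min 2 ε with hmdef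
  have hm : 0 < m := lt_min two_pos hε
  have hball1 : ∀ e ∈ Metric.ball e₀ ε, e < 1 := by
    intro e heb
    rw [Metric.mem_ball, Real.dist_eq, abs_lt] at heb
    linarith [heb.2]
  have hDm : ∀ e ∈ Metric.ball e₀ ε, ∀ ψ, m ≤ Df e ψ := by
    intro e heb ψ
    rw [Metric.mem_ball, Real.dist_eq, abs_lt] at heb
    have h1 : e ≤ e₀ + ε := by linarith [heb.2]
    have h2 : e₀ + ε < 1 := by rw [hεdef]; linarith
    have := D_ge h1 h2 ψ
    have h3 : (1:ℝ) - (e₀ + ε) = ε := by rw [hεdef]; ring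
    rwa [h3] at this
  have hmeasF : ∀ e : ℝ, AEStronglyMeasurable (fun ψ => w ψ / Real.sqrt (Df e ψ))
      (volume.restrict (Set.uIoc (0:ℝ) (π/2))) := by
    intro e
    exact ((hw.measurable).div ((Real.continuous_sqrt.comp (contD e)).measurable)).aestronglyMeasurable
  have hcontF' : ∀ e : ℝ, e < 1 → Continuous
      (fun ψ => w ψ * Real.cos ψ ^ 2 / (2 * Real.sqrt (Df e ψ) ^ 3)) := by
    intro e he1
    apply Continuous.div (hw.mul (Real.continuous_cos.pow 2))
      (continuous_const.mul ((Real.continuous_sqrt.comp (contD e)).pow 3))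
    intro ψ
    have := sqrtD_pos he1 ψ
    show 2 * Real.sqrt (Df e ψ) ^ 3 ≠ 0
    positivity
  refine (intervalIntegral.hasDerivAt_integral_of_dominated_loc_of_deriv_le
    (F' := fun e ψ => w ψ * Real.cos ψ ^ 2 / (2 * Real.sqrt (Df e ψ) ^ 3))
    (bound := fun _ => 1 / (2 * Real.sqrt m ^ 3)) (Metric.ball_mem_nhds e₀ hε)
    (Filter.Eventually.of_forall hmeasF)
    ?_ ?_ ?_ ?_ ?_).2
  · exact ((hw.div (Real.continuous_sqrt.comp (contD e₀))
      (fun ψ => ne_of_gt (sqrtD_pos he ψ))).intervalIntegrable _ _)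
  · exact ((hcontF' e₀ he).measurable).aestronglyMeasurable
  · -- bound
    refine Filter.Eventually.of_forall (fun ψ _ e heb => ?_)
    have hD := hDm e heb ψ
    have hsm : (0:ℝ) < Real.sqrt m := Real.sqrt_pos.mpr hm
    have h1 : Real.sqrt m ≤ Real.sqrt (Df e ψ) := Real.sqrt_le_sqrt hD
    have h3 : Real.sqrt m ^ 3 ≤ Real.sqrt (Df e ψ) ^ 3 :=
      pow_le_pow_left₀ hsm.le h1 3
    have hnum : |w ψ * Real.cos ψ ^ 2| ≤ 1 := by
      rw [abs_mul, abs_sq]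
      nlinarith [hwb ψ, abs_nonneg (w ψ), Real.cos_sq_le_one ψ, sq_abs (Real.cos ψ)]
    have hsD : 0 < Real.sqrt (Df e ψ) := lt_of_lt_of_le hsm h1
    rw [Real.norm_eq_abs, abs_div,
      abs_of_pos (by nlinarith [pow_pos hsD 3] : (0:ℝ) < 2 * Real.sqrt (Df e ψ)^3)]
    exact div_le_div₀ zero_le_one hnum (by nlinarith [pow_pos hsm 3]) (by linarith)
  · exact intervalIntegrable_const
  · -- differentiability
    refine Filter.Eventually.of_forall (fun ψ _ e heb => ?_)
    have h := (hasDerivAt_invSqrtD (hball1 e heb) ψ).const_mul (w ψ)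
    have heq : (fun y => w ψ * (1 / Real.sqrt (Df y ψ))) = fun y => w ψ / Real.sqrt (Df y ψ) := by
      funext y; rw [mul_one_div]
    rw [heq] at h
    refine h.congr_deriv ?_; symm
    ring

noncomputable def Phi (e : ℝ) : ℝ :=
  ∫ ψ in (0:ℝ)..(π/2), Real.sin ψ ^ 2 / Real.sqrt (Df e ψ)

noncomputable def Xi (e : ℝ) : ℝ :=
  ∫ ψ in (0:ℝ)..(π/2), 1 / Real.sqrt (Df e ψ)

noncomputable def Psi (e : ℝ) : ℝ :=
  ∫ ψ in (0:ℝ)..(π/2), Real.sin ψ ^ 2 * Real.cos ψ ^ 2 / (2 * Real.sqrt (Df e ψ) ^ 3)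

lemma cont_inv {e : ℝ} (he : e < 1) : Continuous fun ψ => 1 / Real.sqrt (Df e ψ) :=
  continuous_const.div (Real.continuous_sqrt.comp (contD e))
    (fun ψ => ne_of_gt (sqrtD_pos he ψ))

lemma cont_sin2 {e : ℝ} (he : e < 1) :
    Continuous fun ψ => Real.sin ψ ^ 2 / Real.sqrt (Df e ψ) :=
  (Real.continuous_sin.pow 2).div (Real.continuous_sqrt.comp (contD e))
    (fun ψ => ne_of_gt (sqrtD_pos he ψ))

lemma cont_psi {e : ℝ} (he : e < 1) :
    Continuous fun ψ => Real.sin ψ ^ 2 * Real.cos ψ ^ 2 / (2 * Real.sqrt (Df e ψ) ^ 3) :=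
  ((Real.continuous_sin.pow 2).mul (Real.continuous_cos.pow 2)).div
    (continuous_const.mul ((Real.continuous_sqrt.comp (contD e)).pow 3))
    (fun ψ => by have := sqrtD_pos he ψ; positivity)

lemma hasDerivAt_Phi {e : ℝ} (he : e < 1) : HasDerivAt Phi (Psi e) e := by
  have hb : ∀ ψ : ℝ, |Real.sin ψ ^ 2| ≤ 1 := fun ψ => by
    rw [abs_sq]; exact Real.sin_sq_le_one ψ
  exact hasDerivAt_param (Real.continuous_sin.pow 2) hb he

lemma hasDerivAt_Xi {e : ℝ} (he : e < 1) :
    HasDerivAt Xi (∫ ψ in (0:ℝ)..(π/2), Real.cos ψ ^ 2 / (2 * Real.sqrt (Df e ψ) ^ 3)) e := by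
  have hb : ∀ ψ : ℝ, |(1:ℝ)| ≤ 1 := fun ψ => by norm_num
  have h := hasDerivAt_param (w := fun _ => (1:ℝ)) continuous_const hb he
  rw [show (∫ ψ in (0:ℝ)..(π/2), Real.cos ψ ^ 2 / (2 * Real.sqrt (Df e ψ) ^ 3))
      = ∫ ψ in (0:ℝ)..(π/2), (1:ℝ) * Real.cos ψ ^ 2 / (2 * Real.sqrt (Df e ψ) ^ 3) from
      intervalIntegral.integral_congr (fun ψ _ => by norm_num)]
  exact h

/-- integration by parts identity -/
lemma ibp {e : ℝ} (he : e < 1) :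
    (∫ ψ in (0:ℝ)..(π/2), ((2 * Real.sin ψ ^ 2 - 1) / Real.sqrt (Df e ψ)
      + (1 + e) * (Real.sin ψ ^ 2 * Real.cos ψ ^ 2 / Real.sqrt (Df e ψ) ^ 3))) = 0 := by
  set k : ℝ → ℝ := fun ψ => -(Real.sin ψ * Real.cos ψ) / Real.sqrt (Df e ψ) with hk
  have hderiv : ∀ ψ ∈ uIcc (0:ℝ) (π/2), HasDerivAt k
      ((2 * Real.sin ψ ^ 2 - 1) / Real.sqrt (Df e ψ)
      + (1 + e) * (Real.sin ψ ^ 2 * Real.cos ψ ^ 2 / Real.sqrt (Df e ψ) ^ 3)) ψ := by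
    intro ψ _
    have hD := D_pos he ψ
    have hsD := sqrtD_pos he ψ
    have hnum : HasDerivAt (fun ψ => -(Real.sin ψ * Real.cos ψ))
        (Real.sin ψ ^ 2 - Real.cos ψ ^ 2) ψ := by
      have := ((Real.hasDerivAt_sin ψ).mul (Real.hasDerivAt_cos ψ)).neg
      refine this.congr_deriv ?_; symm; ring
    have hD2 : HasDerivAt (fun ψ => Df e ψ) ((1 + e) * (2 * Real.sin ψ * Real.cos ψ)) ψ := by
      have hsin2 : HasDerivAt (fun ψ => Real.sin ψ ^ 2) (2 * Real.sin ψ * Real.cos ψ) ψ := by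
        have := (Real.hasDerivAt_sin ψ).pow 2
        refine this.congr_deriv ?_; symm; ring
      have := (hsin2.const_mul (1 + e)).const_add (1 - e)
      exact this
    have hden : HasDerivAt (fun ψ => Real.sqrt (Df e ψ))
        ((1 + e) * (2 * Real.sin ψ * Real.cos ψ) / (2 * Real.sqrt (Df e ψ))) ψ :=
      hD2.sqrt (ne_of_gt hD)
    have h := hnum.div hden (ne_of_gt hsD)
    refine h.congr_deriv ?_; symm
    have hc2 : Real.cos ψ ^ 2 = 1 - Real.sin ψ ^ 2 := Real.cos_sq' ψ
    field_simp
    ring_nf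
    rw [hc2]
    linear_combination (-(2*Real.sin ψ^2*Real.sqrt (Df e ψ)^2*e + 2*Real.sin ψ^2*Real.sqrt (Df e ψ)^2
      + 4*Real.sin ψ^2*Real.sqrt (Df e ψ)^4 - 2*Real.sin ψ^4*Real.sqrt (Df e ψ)^2*e
      - 2*Real.sin ψ^4*Real.sqrt (Df e ψ)^2 - 2*Real.sqrt (Df e ψ)^4)
      + Real.sqrt (Df e ψ)^2 * ((4*Real.sin ψ^2 - 2) * Real.sqrt (Df e ψ)^2 + 2*Real.sin ψ^2
        + 2*Real.sin ψ^2*e - 2*Real.sin ψ^4 - 2*Real.sin ψ^4*e - 2*Df e ψ)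
      + 2*Real.sqrt (Df e ψ)^2*Df e ψ) * (Real.sq_sqrt hD.le)
  have hint : IntervalIntegrable (fun ψ => (2 * Real.sin ψ ^ 2 - 1) / Real.sqrt (Df e ψ)
      + (1 + e) * (Real.sin ψ ^ 2 * Real.cos ψ ^ 2 / Real.sqrt (Df e ψ) ^ 3))
      volume 0 (π/2) := by
    apply Continuous.intervalIntegrable
    apply Continuous.add
    · exact ((continuous_const.mul (Real.continuous_sin.pow 2)).sub continuous_const).div
        (Real.continuous_sqrt.comp (contD e)) (fun ψ => ne_of_gt (sqrtD_pos he ψ))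
    · exact continuous_const.mul
        (((Real.continuous_sin.pow 2).mul (Real.continuous_cos.pow 2)).div
          ((Real.continuous_sqrt.comp (contD e)).pow 3)
          (fun ψ => by have := sqrtD_pos he ψ; positivity))
  rw [intervalIntegral.integral_eq_sub_of_hasDerivAt hderiv hint]
  simp [hk]



lemma key_identity {e : ℝ} (he : e < 1) : 2 * Phi e + 2 * (1 + e) * Psi e = Xi e := by
  have h0 := ibp he
  have hcongr : (∫ ψ in (0:ℝ)..(π/2), ((2 * Real.sin ψ ^ 2 - 1) / Real.sqrt (Df e ψ)
      + (1 + e) * (Real.sin ψ ^ 2 * Real.cos ψ ^ 2 / Real.sqrt (Df e ψ) ^ 3)))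
      = ∫ ψ in (0:ℝ)..(π/2), (2 * (Real.sin ψ ^ 2 / Real.sqrt (Df e ψ)) - 1 / Real.sqrt (Df e ψ)
      + (2 * (1 + e)) * (Real.sin ψ ^ 2 * Real.cos ψ ^ 2 / (2 * Real.sqrt (Df e ψ) ^ 3))) := by
    apply intervalIntegral.integral_congr
    intro ψ _
    have hu := sqrtD_pos he ψ
    have hu' : Real.sqrt (Df e ψ) ≠ 0 := ne_of_gt hu
    field_simp
  rw [hcongr] at h0
  have i1 : IntervalIntegrable (fun ψ => Real.sin ψ ^ 2 / Real.sqrt (Df e ψ)) volume 0 (π/2) :=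
    (cont_sin2 he).intervalIntegrable _ _
  have i2 : IntervalIntegrable (fun ψ => 1 / Real.sqrt (Df e ψ)) volume 0 (π/2) :=
    (cont_inv he).intervalIntegrable _ _
  have i3 : IntervalIntegrable
      (fun ψ => Real.sin ψ ^ 2 * Real.cos ψ ^ 2 / (2 * Real.sqrt (Df e ψ) ^ 3)) volume 0 (π/2) :=
    (cont_psi he).intervalIntegrable _ _
  rw [intervalIntegral.integral_add ((i1.const_mul 2).sub i2) (i3.const_mul (2*(1+e))),
    intervalIntegral.integral_sub (i1.const_mul 2) i2,
    intervalIntegral.integral_const_mul, intervalIntegral.integral_const_mul] at h0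
  unfold Phi Xi Psi
  linarith [h0]

noncomputable def Aa (e : ℝ) : ℝ := 8 * Real.sqrt 2 * ((1 + e) * Phi e)

lemma hasDerivAt_Aa {e : ℝ} (he : e < 1) :
    HasDerivAt Aa (4 * Real.sqrt 2 * Xi e) e := by
  have h1 : HasDerivAt (fun e => (1 + e) * Phi e) (1 * Phi e + (1 + e) * Psi e) e :=
    ((hasDerivAt_id e).const_add 1).mul (hasDerivAt_Phi he)
  have h2 := h1.const_mul (8 * Real.sqrt 2)
  refine h2.congr_deriv ?_; symm
  linear_combination (-(4 * Real.sqrt 2)) * key_identity he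

lemma Xi_pos {e : ℝ} (he : e < 1) : 0 < Xi e := by
  apply intervalIntegral_pos_of_pos_on ((cont_inv he).intervalIntegrable _ _)
  · intro ψ _
    have := sqrtD_pos he ψ
    positivity
  · linarith [Real.pi_pos]

lemma Xi_strictMono {e₁ e₂ : ℝ} (he2 : e₂ < 1) (hlt : e₁ < e₂) : Xi e₁ < Xi e₂ := by
  have he1 : e₁ < 1 := lt_trans hlt he2
  have hpos : 0 < ∫ ψ in (0:ℝ)..(π/2), (1/Real.sqrt (Df e₂ ψ) - 1/Real.sqrt (Df e₁ ψ)) := by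
    apply intervalIntegral_pos_of_pos_on (((cont_inv he2).sub (cont_inv he1)).intervalIntegrable _ _)
    · intro ψ hψ
      have hpi := Real.pi_pos
      have hsin0 : 0 < Real.sin ψ := Real.sin_pos_of_pos_of_lt_pi hψ.1 (by linarith [hψ.2])
      have hsin1 : Real.sin ψ < 1 := by
        have := Real.strictMonoOn_sin ⟨by linarith [hψ.1], (le_of_lt hψ.2)⟩
          ⟨by linarith, le_refl _⟩ hψ.2
        rwa [Real.sin_pi_div_two] at this
      have hs2 : Real.sin ψ ^ 2 < 1 := by nlinarith
      have hDlt : Df e₂ ψ < Df e₁ ψ := by unfold Df; nlinarith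
      have hD2 := D_pos he2 ψ
      have hsq := Real.sqrt_lt_sqrt hD2.le hDlt
      have hs2' := sqrtD_pos he2 ψ
      rw [Pi.sub_apply, sub_pos]
      exact one_div_lt_one_div_of_lt hs2' hsq
    · linarith [Real.pi_pos]
  have hsub : (∫ ψ in (0:ℝ)..(π/2), (1/Real.sqrt (Df e₂ ψ) - 1/Real.sqrt (Df e₁ ψ)))
      = (∫ ψ in (0:ℝ)..(π/2), 1/Real.sqrt (Df e₂ ψ))
        - ∫ ψ in (0:ℝ)..(π/2), 1/Real.sqrt (Df e₁ ψ) :=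
    intervalIntegral.integral_sub ((cont_inv he2).intervalIntegrable _ _)
      ((cont_inv he1).intervalIntegrable _ _)
  have hkey : Xi e₂ - Xi e₁
      = ∫ ψ in (0:ℝ)..(π/2), (1/Real.sqrt (Df e₂ ψ) - 1/Real.sqrt (Df e₁ ψ)) := by
    unfold Xi
    rw [hsub]
  linarith [hkey, hpos]

lemma D_neg_one (ψ : ℝ) : Df (-1) ψ = 2 := by unfold Df; ring

lemma Xi_neg_one : 4 * Real.sqrt 2 * Xi (-1) = 2 * π := by
  have h : Xi (-1) = (π/2) * (1/Real.sqrt 2) := by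
    have hXi : Xi (-1) = ∫ ψ in (0:ℝ)..(π/2), (1/Real.sqrt 2 : ℝ) := by
      unfold Xi
      apply intervalIntegral.integral_congr
      intro ψ _
      dsimp only
      rw [D_neg_one]
    rw [hXi, intervalIntegral.integral_const, smul_eq_mul]
    ring
  rw [h]
  have h2 : Real.sqrt 2 * Real.sqrt 2 = 2 := Real.mul_self_sqrt (by norm_num)
  have h0 : Real.sqrt 2 ≠ 0 := by positivity
  have hstep : 4 * Real.sqrt 2 * ((π/2) * (1/Real.sqrt 2))
      = 2 * π * (Real.sqrt 2 / Real.sqrt 2) := by ring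
  rw [hstep, div_self h0, mul_one]

lemma cos_subf {e : ℝ} (he : -1 ≤ e) (he1 : e ≤ 1) (ψ : ℝ) :
    Real.cos (subf e ψ) = 1 - (1 + e) * Real.cos ψ ^ 2 := by
  set c := Real.sqrt ((1+e)/2) with hc
  have hc2 : c ^ 2 = (1+e)/2 := Real.sq_sqrt (by linarith)
  have hb : (c * Real.cos ψ) ^ 2 ≤ 1 := by
    rw [mul_pow, hc2]
    nlinarith [Real.cos_sq_le_one ψ, sq_nonneg (Real.cos ψ)]
  rw [subf, Real.cos_two_mul, Real.cos_arcsin,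
    Real.sq_sqrt (by nlinarith : (0:ℝ) ≤ 1 - (c * Real.cos ψ) ^ 2), mul_pow, hc2]
  ring

end Alpha1Aux

open Alpha1Aux in
lemma alpha_bridge {e : ℝ} (he : -1 < e) (he1 : e < 1) :
    (∫ θ in (0:ℝ)..(theta1 e), Real.sqrt (e + Real.cos θ)) = 2 * (1 + e) * Phi e := by
  have hθ : 0 ≤ theta1 e := Real.arccos_nonneg _
  have hpi : (0:ℝ) < π/2 := by linarith [Real.pi_pos]
  rw [intervalIntegral.integral_of_le hθ, MeasureTheory.integral_Ioc_eq_integral_Ioo,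
    subst_gen he he1]
  have hcongr : Set.EqOn
      (fun ψ => (2 * Real.sqrt (1+e) * Real.sin ψ / Real.sqrt (Df e ψ)) * Real.sqrt (e + Real.cos (subf e ψ)))
      (fun ψ => (2*(1+e)) * (Real.sin ψ ^ 2 / Real.sqrt (Df e ψ))) (Set.Ioo 0 (π/2)) := by
    intro ψ hψ
    have hsin : 0 < Real.sin ψ := Real.sin_pos_of_pos_of_lt_pi hψ.1 (by linarith [hψ.2, Real.pi_pos])
    have hval : e + Real.cos (subf e ψ) = (1+e) * Real.sin ψ ^ 2 := by
      rw [cos_subf he.le he1.le, Real.sin_sq]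
      ring
    have hsD := sqrtD_pos he1 ψ
    have h1e : (0:ℝ) ≤ 1 + e := by linarith
    dsimp only
    rw [hval, Real.sqrt_mul h1e, Real.sqrt_sq_eq_abs, abs_of_pos hsin]
    have hp2 : Real.sqrt (1+e) ^ 2 = 1 + e := Real.sq_sqrt h1e
    field_simp
    linear_combination hp2
  rw [MeasureTheory.setIntegral_congr_fun measurableSet_Ioo hcongr,
    ← MeasureTheory.integral_Ioc_eq_integral_Ioo,
    ← intervalIntegral.integral_of_le hpi.le, intervalIntegral.integral_const_mul]
  rfl

open Alpha1Aux in
lemma dalpha_bridge {e : ℝ} (he : -1 < e) (he1 : e < 1) :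
    (∫ θ in (0:ℝ)..(theta1 e), 1 / Real.sqrt (e + Real.cos θ)) = 2 * Xi e := by
  have hθ : 0 ≤ theta1 e := Real.arccos_nonneg _
  have hpi : (0:ℝ) < π/2 := by linarith [Real.pi_pos]
  rw [intervalIntegral.integral_of_le hθ, MeasureTheory.integral_Ioc_eq_integral_Ioo,
    subst_gen he he1]
  have hcongr : Set.EqOn
      (fun ψ => (2 * Real.sqrt (1+e) * Real.sin ψ / Real.sqrt (Df e ψ)) * (1 / Real.sqrt (e + Real.cos (subf e ψ))))
      (fun ψ => (2:ℝ) * (1 / Real.sqrt (Df e ψ))) (Set.Ioo 0 (π/2)) := by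
    intro ψ hψ
    have hsin : 0 < Real.sin ψ := Real.sin_pos_of_pos_of_lt_pi hψ.1 (by linarith [hψ.2, Real.pi_pos])
    have hval : e + Real.cos (subf e ψ) = (1+e) * Real.sin ψ ^ 2 := by
      rw [cos_subf he.le he1.le, Real.sin_sq]
      ring
    have hsD := sqrtD_pos he1 ψ
    have h1e : (0:ℝ) < 1 + e := by linarith
    have hse : 0 < Real.sqrt (1+e) := Real.sqrt_pos.mpr h1e
    dsimp only
    rw [hval, Real.sqrt_mul h1e.le, Real.sqrt_sq_eq_abs, abs_of_pos hsin]
    field_simp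
  rw [MeasureTheory.setIntegral_congr_fun measurableSet_Ioo hcongr,
    ← MeasureTheory.integral_Ioc_eq_integral_Ioo,
    ← intervalIntegral.integral_of_le hpi.le, intervalIntegral.integral_const_mul]
  rfl

/-- α₁ is strictly increasing, strictly convex and C¹ on [-1,1),
with derivative 2√2 ∫₀^{θ₁(e)} (e + cos θ)^{-1/2} dθ on (-1,1) and
right-derivative 2π at e = -1. -/
theorem alpha1_convex_left :
    StrictMonoOn alpha1 (Set.Ico (-1:ℝ) 1) ∧
    StrictConvexOn ℝ (Set.Ico (-1:ℝ) 1) alpha1 ∧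
    ContDiffOn ℝ 1 alpha1 (Set.Ico (-1:ℝ) 1) ∧
    (∀ e ∈ Set.Ioo (-1:ℝ) 1, HasDerivAt alpha1 (dalpha1 e) e) ∧
    HasDerivWithinAt alpha1 (2 * π) (Set.Ici (-1:ℝ)) (-1) := by
  have hAa_eq : ∀ x ∈ Set.Ico (-1:ℝ) 1, alpha1 x = Alpha1Aux.Aa x := by
    intro x hx
    rcases eq_or_lt_of_le hx.1 with h | h
    · rw [← h]
      have ht : theta1 (-1) = 0 := by
        unfold theta1; norm_num [Real.arccos_one]
      show 4 * Real.sqrt 2 * (∫ θ in (0:ℝ)..(theta1 (-1)), Real.sqrt ((-1) + Real.cos θ)) = _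
      rw [ht, intervalIntegral.integral_same]
      show _ = 8 * Real.sqrt 2 * ((1 + (-1)) * Alpha1Aux.Phi (-1))
      ring
    · show 4 * Real.sqrt 2 * _ = 8 * Real.sqrt 2 * ((1 + x) * Alpha1Aux.Phi x)
      rw [alpha_bridge h hx.2]
      ring
  have hdal : ∀ e ∈ Set.Ioo (-1:ℝ) 1, dalpha1 e = 4 * Real.sqrt 2 * Alpha1Aux.Xi e := by
    intro e he
    show 2 * Real.sqrt 2 * _ = _
    rw [dalpha_bridge he.1 he.2]
    ring
  have hderiv : ∀ e ∈ Set.Ioo (-1:ℝ) 1, HasDerivAt alpha1 (dalpha1 e) e := by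
    intro e he
    have hA := Alpha1Aux.hasDerivAt_Aa he.2
    have heq : alpha1 =ᶠ[nhds e] Alpha1Aux.Aa := by
      filter_upwards [Ioo_mem_nhds he.1 he.2] with x hx
      exact hAa_eq x (Ioo_subset_Ico_self hx)
    rw [hdal e he]
    exact hA.congr_of_eventuallyEq heq
  have hAaC1 : ContDiffOn ℝ 1 Alpha1Aux.Aa (Set.Iio (1:ℝ)) := by
    have hiff := contDiffOn_succ_iff_deriv_of_isOpen (𝕜 := ℝ) (f := Alpha1Aux.Aa)
      (s := Set.Iio (1:ℝ)) (n := 0) isOpen_Iio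
    rw [zero_add] at hiff
    rw [hiff]
    refine ⟨fun x hx => (Alpha1Aux.hasDerivAt_Aa hx).differentiableAt.differentiableWithinAt,
      by simp, ?_⟩
    rw [contDiffOn_zero]
    apply ContinuousOn.congr (f := fun e => 4 * Real.sqrt 2 * Alpha1Aux.Xi e)
    · intro x hx
      exact (continuousAt_const.mul (Alpha1Aux.hasDerivAt_Xi hx).continuousAt).continuousWithinAt
    · intro x hx
      exact (Alpha1Aux.hasDerivAt_Aa hx).deriv
  have hC1 : ContDiffOn ℝ 1 alpha1 (Set.Ico (-1:ℝ) 1) :=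
    (hAaC1.mono Ico_subset_Iio_self).congr hAa_eq
  have hmono : StrictMonoOn alpha1 (Set.Ico (-1:ℝ) 1) := by
    apply strictMonoOn_of_deriv_pos (convex_Ico _ _) hC1.continuousOn
    intro x hx
    rw [interior_Ico] at hx
    rw [(hderiv x hx).deriv, hdal x hx]
    have h1 := Alpha1Aux.Xi_pos hx.2
    have h2 : (0:ℝ) < 4 * Real.sqrt 2 := by positivity
    exact mul_pos h2 h1
  have hconv : StrictConvexOn ℝ (Set.Ico (-1:ℝ) 1) alpha1 := by
    apply StrictMonoOn.strictConvexOn_of_deriv (convex_Ico _ _) hC1.continuousOn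
    rw [interior_Ico]
    intro x hx y hy hxy
    rw [(hderiv x hx).deriv, (hderiv y hy).deriv, hdal x hx, hdal y hy]
    have h1 := Alpha1Aux.Xi_strictMono hy.2 hxy
    have h2 : (0:ℝ) < 4 * Real.sqrt 2 := by positivity
    nlinarith
  have hend : HasDerivWithinAt alpha1 (2 * π) (Set.Ici (-1:ℝ)) (-1) := by
    have hA := (Alpha1Aux.hasDerivAt_Aa (by norm_num : (-1:ℝ) < 1)).hasDerivWithinAt
      (s := Set.Ici (-1:ℝ))
    rw [Alpha1Aux.Xi_neg_one] at hA
    have hmem : Set.Ico (-1:ℝ) 1 ∈ nhdsWithin (-1:ℝ) (Set.Ici (-1:ℝ)) := by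
      rw [← Set.Ici_inter_Iio]
      exact Filter.inter_mem self_mem_nhdsWithin
        (mem_nhdsWithin_of_mem_nhds (Iio_mem_nhds (by norm_num)))
    refine hA.congr_of_eventuallyEq ?_ ?_
    · filter_upwards [hmem] with x hx using hAa_eq x hx
    · exact hAa_eq (-1) (by constructor <;> norm_num)
  exact ⟨hmono, hconv, hC1, hderiv, hend⟩
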